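/- Let (A,▷,◁) be an L-dendriform algebra over a field of characteristic zero with associated horizontal pre-Lie algebra (A,•), x•y = x▷y + x◁y, and associated vertical pre-Lie algebra (A,∘), x∘y = x▷y − y◁x. Then (L_▷* − R_◁*, −R_◁*, A*) is a module of (A,•), and (L_▷* + L_◁*, L_◁*, A*) is a module of (A,∘), where L_▷(x)y = x▷y, L_◁(x)y = x◁y, R_◁(y)x = x◁y, and for ρ : A → gl(A), ρ* : A → gl(A*) is defined by ⟨ρ*(x)v*, u⟩ = −⟨v*, ρ(x)u⟩. -/
import Mathlib


set_option maxSynthPendingDepth 3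
set_option synthInstance.maxHeartbeats 400000
set_option maxHeartbeats 800000

/-- A module `(l,r,V)` of a pre-Lie algebra `(A,∘)`. -/
def IsPreLieModule {K A V : Type*} [Field K] [AddCommGroup A] [Module K A]
    [AddCommGroup V] [Module K V]
    (mul : A →ₗ[K] A →ₗ[K] A) (l r : A →ₗ[K] Module.End K V) : Prop :=
  (∀ x y : A, l x * l y - l (mul x y) = l y * l x - l (mul y x)) ∧
  (∀ x y : A, l x * r y - r y * l x = r (mul x y) - r y * r x)

/-- The dual map `ρ* : A → gl(V*)` defined by `⟨ρ*(x)v*, u⟩ = −⟨v*, ρ(x)u⟩`. -/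
noncomputable def dualRep {K A V : Type*} [Field K] [AddCommGroup A] [Module K A]
    [AddCommGroup V] [Module K V]
    (ρ : A →ₗ[K] Module.End K V) : A →ₗ[K] Module.End K (Module.Dual K V) :=
  -((Module.Dual.transpose (R := K) (M := V) (M' := V)) ∘ₗ ρ)

/-- An L-dendriform algebra structure. -/
def IsLDendriform {K A : Type*} [Field K] [AddCommGroup A] [Module K A]
    (tr tl : A →ₗ[K] A →ₗ[K] A) : Prop :=
  (∀ x y z : A, tr x (tr y z) =
      tr (tr x y) z + tr (tl x y) z + tr y (tr x z) - tr (tl y x) z - tr (tr y x) z) ∧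
  (∀ x y z : A, tr x (tl y z) =
      tl (tr x y) z + tl y (tr x z) + tl y (tl x z) - tl (tl y x) z)

/-- For an L-dendriform algebra `(A,▷,◁)` with horizontal pre-Lie
product `x•y = x▷y + x◁y` (i.e. `tr + tl`) and vertical pre-Lie product
`x∘y = x▷y − y◁x` (i.e. `tr - tl.flip`): `(L_▷* − R_◁*, −R_◁*, A*)` is a module of
`(A,•)` and `(L_▷* + L_◁*, L_◁*, A*)` is a module of `(A,∘)`, where `L_▷ = tr`,
`L_◁ = tl`, `R_◁ = tl.flip`. -/
theorem dual_modules_of_LDendriform {K A : Type*} [Field K] [CharZero K]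
    [AddCommGroup A] [Module K A]
    (tr tl : A →ₗ[K] A →ₗ[K] A) (h : IsLDendriform tr tl) :
    IsPreLieModule (tr + tl) (dualRep tr - dualRep tl.flip) (-(dualRep tl.flip)) ∧
    IsPreLieModule (tr - tl.flip) (dualRep tr + dualRep tl) (dualRep tl) := by

  obtain ⟨h1, h2⟩ := h
  refine ⟨⟨fun x y => ?_, fun x y => ?_⟩, ⟨fun x y => ?_, fun x y => ?_⟩⟩ <;>
  · ext v u
    have e1 := congrArg v (h1 x y u)
    have e2 := congrArg v (h2 x u y)
    have e3 := congrArg v (h2 y u x)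
    have e4 := congrArg v (h2 x y u)
    have e5 := congrArg v (h2 y x u)
    simp only [map_add, map_sub] at e1 e2 e3 e4 e5
    simp only [dualRep, Module.Dual.transpose, LinearMap.sub_apply, LinearMap.add_apply,
      LinearMap.neg_apply, Module.End.mul_apply, LinearMap.comp_apply, LinearMap.flip_apply,
      LinearMap.llcomp_apply, map_add, map_sub, map_neg]
    first
      | linear_combination -e1 + e2 - e3
      | linear_combination e2
      | linear_combination -e2
      | linear_combination -e1 - e4 + e5
      | linear_combination e4
      | linear_combination -e4
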